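/- For any E ∈ Σ and n ∈ ℕ, Q*_ω(σ^{-n}(E)) = Φ^{(n)†}_ω(Q*_{θⁿ(ω)}(E)) ℙ-a.s., where Φ^{(n)}_ω = φ_{θⁿ(ω)} ∘ ⋯ ∘ φ_{θ(ω)}; consequently ℚ_{ϑ;ω}(σ^{-n}(E)) = ⟨Φ^{(n)}_ω(ϑ_ω), Q*_{θⁿ(ω)}(E)⟩ for any random state ϑ. -/

import Mathlib

open MeasureTheory Matrix Filter
open scoped ComplexOrder ENNReal

/-- Cylinder set of sequences whose first n coordinates equal a given word. -/
def cyl {𝒜 : Type*} (n : ℕ) (w : Fin n → 𝒜) : Set (ℕ → 𝒜) :=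
  {x | ∀ i : Fin n, x i = w i}

/-- V_{n;ω}(a_1,…,a_n) = v_{a_n; θⁿ(ω)} ⋯ v_{a_1; θ(ω)}. -/
noncomputable def Vq {Ω 𝒜 : Type*} {d : ℕ} (v : Ω → 𝒜 → Matrix (Fin d) (Fin d) ℂ)
    (θ : Ω → Ω) (ω : Ω) : (n : ℕ) → (Fin n → 𝒜) → Matrix (Fin d) (Fin d) ℂ
  | 0, _ => 1
  | n + 1, w => v (θ^[n + 1] ω) (w (Fin.last n)) * Vq v θ ω n (fun i => w i.castSucc)

/-- The left shift σ on 𝒜^ℕ. -/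
def shiftSeq {𝒜 : Type*} (x : ℕ → 𝒜) : ℕ → 𝒜 := fun k => x (k + 1)

/-- The skew shift τ(ω, ā) = (θ(ω), σ(ā)). -/
def tau {Ω 𝒜 : Type*} (θ : Ω → Ω) : Ω × (ℕ → 𝒜) → Ω × (ℕ → 𝒜) :=
  fun p => (θ p.1, shiftSeq p.2)

/-- The annealed quantum measure ℚ̄(Γ) = ∫_Ω ℚ_ω(Γ^ω) dℙ(ω). -/
noncomputable def annealed {Ω 𝒜 : Type*} [MeasurableSpace Ω] [MeasurableSpace 𝒜] (μ : Measure Ω)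
    (Q : Ω → Measure (ℕ → 𝒜)) (Γ : Set (Ω × (ℕ → 𝒜))) : ℝ≥0∞ :=
  ∫⁻ ω, Q ω {x | (ω, x) ∈ Γ} ∂μ

/-- T†_{a_1;θ(ω)} ∘ ⋯ ∘ T†_{a_n;θⁿ(ω)} applied to L, where T†_{a;ω}(L) = v_{a;ω}† L v_{a;ω}. -/
noncomputable def Tdagq {Ω 𝒜 : Type*} {d : ℕ} (v : Ω → 𝒜 → Matrix (Fin d) (Fin d) ℂ)
    (θ : Ω → Ω) : Ω → (n : ℕ) → (Fin n → 𝒜) →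
      Matrix (Fin d) (Fin d) ℂ → Matrix (Fin d) (Fin d) ℂ
  | _, 0, _, L => L
  | ω, n + 1, w, L =>
      (v (θ ω) (w 0))ᴴ * Tdagq v θ (θ ω) n (fun i => w i.succ) L * v (θ ω) (w 0)

/-- Φ^{(n)}_ω = φ_{θⁿ(ω)} ∘ ⋯ ∘ φ_{θ(ω)}. -/
noncomputable def Phiq {Ω 𝒜 : Type*} {d : ℕ} [Fintype 𝒜]
    (v : Ω → 𝒜 → Matrix (Fin d) (Fin d) ℂ) (θ : Ω → Ω) (ω : Ω) :
    ℕ → Matrix (Fin d) (Fin d) ℂ → Matrix (Fin d) (Fin d) ℂ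
  | 0, M => M
  | n + 1, M => ∑ a, v (θ^[n + 1] ω) a * Phiq v θ ω n M * (v (θ^[n + 1] ω) a)ᴴ

/-- The Hilbert–Schmidt adjoint Φ^{(n)†}_ω = φ†_{θ(ω)} ∘ ⋯ ∘ φ†_{θⁿ(ω)}. -/
noncomputable def Phidagq {Ω 𝒜 : Type*} {d : ℕ} [Fintype 𝒜]
    (v : Ω → 𝒜 → Matrix (Fin d) (Fin d) ℂ) (θ : Ω → Ω) :
    Ω → ℕ → Matrix (Fin d) (Fin d) ℂ → Matrix (Fin d) (Fin d) ℂ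
  | _, 0, L => L
  | ω, n + 1, L => ∑ a, (v (θ ω) a)ᴴ * Phidagq v θ (θ ω) n L * v (θ ω) a

section Aux


variable {Ω 𝒜 : Type*} {d : ℕ} [Fintype 𝒜]

lemma phidag_zero (v : Ω → 𝒜 → Matrix (Fin d) (Fin d) ℂ) (θ : Ω → Ω) (ω : Ω)
    (L : Matrix (Fin d) (Fin d) ℂ) : Phidagq v θ ω 0 L = L := rfl

lemma phidag_one (v : Ω → 𝒜 → Matrix (Fin d) (Fin d) ℂ) (θ : Ω → Ω) (ω : Ω)
    (L : Matrix (Fin d) (Fin d) ℂ) :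
    Phidagq v θ ω 1 L = ∑ a, (v (θ ω) a)ᴴ * L * v (θ ω) a := rfl

lemma phidag_succ (v : Ω → 𝒜 → Matrix (Fin d) (Fin d) ℂ) (θ : Ω → Ω) (ω : Ω) (n : ℕ)
    (L : Matrix (Fin d) (Fin d) ℂ) :
    Phidagq v θ ω (n + 1) L = Phidagq v θ ω 1 (Phidagq v θ (θ ω) n L) := rfl

lemma phidag_one_sub (v : Ω → 𝒜 → Matrix (Fin d) (Fin d) ℂ) (θ : Ω → Ω) (ω : Ω)
    (A B : Matrix (Fin d) (Fin d) ℂ) :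
    Phidagq v θ ω 1 (A - B) = Phidagq v θ ω 1 A - Phidagq v θ ω 1 B := by
  simp only [phidag_one, mul_sub, sub_mul, Finset.sum_sub_distrib]

lemma hasSum_mul_entry {L : ℕ → Matrix (Fin d) (Fin d) ℂ} {S : Matrix (Fin d) (Fin d) ℂ}
    (h : ∀ p q, HasSum (fun k => L k p q) (S p q))
    (A B : Matrix (Fin d) (Fin d) ℂ) (i j : Fin d) :
    HasSum (fun k => (A * L k * B) i j) ((A * S * B) i j) := by
  have key : ∀ M : Matrix (Fin d) (Fin d) ℂ,
      (A * M * B) i j = ∑ q, ∑ p, A i p * M p q * B q j := by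
    intro M
    simp only [Matrix.mul_apply, Finset.sum_mul]
  simp only [key]
  exact hasSum_sum fun q _ => hasSum_sum fun p _ =>
    ((h p q).mul_left (A i p)).mul_right (B q j)

lemma hasSum_phidag_one (v : Ω → 𝒜 → Matrix (Fin d) (Fin d) ℂ) (θ : Ω → Ω) (ω : Ω)
    {L : ℕ → Matrix (Fin d) (Fin d) ℂ} {S : Matrix (Fin d) (Fin d) ℂ}
    (h : ∀ p q, HasSum (fun k => L k p q) (S p q)) (i j : Fin d) :
    HasSum (fun k => Phidagq v θ ω 1 (L k) i j) (Phidagq v θ ω 1 S i j) := by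
  simp only [phidag_one, Matrix.sum_apply]
  exact hasSum_sum fun a _ => hasSum_mul_entry h _ _ i j

lemma phi_succ (v : Ω → 𝒜 → Matrix (Fin d) (Fin d) ℂ) (θ : Ω → Ω) (n : ℕ) :
    ∀ (ω : Ω) (M : Matrix (Fin d) (Fin d) ℂ),
    Phiq v θ ω (n + 1) M = Phiq v θ (θ ω) n (∑ a, v (θ ω) a * M * (v (θ ω) a)ᴴ) := by
  induction n with
  | zero => intro ω M; simp [Phiq]
  | succ n ih =>
    intro ω M
    show (∑ a, v (θ^[n + 2] ω) a * Phiq v θ ω (n + 1) M * (v (θ^[n + 2] ω) a)ᴴ) = _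
    rw [show Phiq v θ (θ ω) (n + 1) (∑ a, v (θ ω) a * M * (v (θ ω) a)ᴴ)
        = ∑ a, v (θ^[n + 1] (θ ω)) a * Phiq v θ (θ ω) n (∑ a, v (θ ω) a * M * (v (θ ω) a)ᴴ)
            * (v (θ^[n + 1] (θ ω)) a)ᴴ from rfl]
    rw [← ih ω M]
    simp only [← Function.iterate_succ_apply θ (n + 1) ω]

lemma trace_adjoint (v : Ω → 𝒜 → Matrix (Fin d) (Fin d) ℂ) (θ : Ω → Ω) (n : ℕ) :
    ∀ (ω : Ω) (A L : Matrix (Fin d) (Fin d) ℂ),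
    (Aᴴ * Phidagq v θ ω n L).trace = ((Phiq v θ ω n A)ᴴ * L).trace := by
  induction n with
  | zero => intro ω A L; rfl
  | succ n ih =>
    intro ω A L
    rw [phi_succ, ← ih]
    rw [phidag_succ, phidag_one]
    simp only [Matrix.mul_sum, Matrix.trace_sum, conjTranspose_sum, conjTranspose_mul,
      conjTranspose_conjTranspose, Matrix.sum_mul]
    refine Finset.sum_congr rfl fun a _ => ?_
    rw [← mul_assoc, ← mul_assoc, Matrix.trace_mul_comm]
    rw [mul_assoc, mul_assoc, mul_assoc]

lemma tdag_succ (v : Ω → 𝒜 → Matrix (Fin d) (Fin d) ℂ) (θ : Ω → Ω) (ω : Ω) (N : ℕ)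
    (w : Fin (N + 1) → 𝒜) (L : Matrix (Fin d) (Fin d) ℂ) :
    Tdagq v θ ω (N + 1) w L
      = (v (θ ω) (w 0))ᴴ * Tdagq v θ (θ ω) N (fun i => w i.succ) L * v (θ ω) (w 0) := rfl

end Aux


lemma Q_empty_aux {𝒜 : Type*} [MeasurableSpace 𝒜] {d : ℕ}
    (Q : Set (ℕ → 𝒜) → Matrix (Fin d) (Fin d) ℂ)
    (hadd : ∀ f : ℕ → Set (ℕ → 𝒜), (∀ k, MeasurableSet (f k)) →
      Pairwise (Function.onFun Disjoint f) →
      ∀ i j, HasSum (fun k => Q (f k) i j) (Q (⋃ k, f k) i j)) :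
    Q ∅ = 0 := by
  ext i j
  have h := hadd (fun _ => ∅) (fun _ => MeasurableSet.empty)
    (fun k l _ => by simp [Function.onFun]) i j
  rw [Set.iUnion_empty] at h
  have h0 : Q ∅ i j = 0 :=
    tendsto_nhds_unique tendsto_const_nhds h.summable.tendsto_atTop_zero
  simpa using h0

lemma Q_finadd_aux {𝒜 : Type*} [MeasurableSpace 𝒜] {d : ℕ}
    (Q : Set (ℕ → 𝒜) → Matrix (Fin d) (Fin d) ℂ)
    (hadd : ∀ f : ℕ → Set (ℕ → 𝒜), (∀ k, MeasurableSet (f k)) →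
      Pairwise (Function.onFun Disjoint f) →
      ∀ i j, HasSum (fun k => Q (f k) i j) (Q (⋃ k, f k) i j))
    {ι : Type*} [Fintype ι] (f : ι → Set (ℕ → 𝒜))
    (hm : ∀ k, MeasurableSet (f k)) (hd : Pairwise (Function.onFun Disjoint f)) :
    Q (⋃ k, f k) = ∑ k, Q (f k) := by
  classical
  have h0 : Q ∅ = 0 := Q_empty_aux Q hadd
  set M := Fintype.card ι with hM
  let e : Fin M ≃ ι := (Fintype.equivFin ι).symm
  set g : ℕ → Set (ℕ → 𝒜) := fun k => if h : k < M then f (e ⟨k, h⟩) else ∅ with hg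
  have hgm : ∀ k, MeasurableSet (g k) := by
    intro k; by_cases h : k < M <;> simp [hg, h, hm]
  have hgd : Pairwise (Function.onFun Disjoint g) := by
    intro k l hkl
    simp only [Function.onFun, hg]
    split_ifs with hk hl hl
    · refine hd fun hEq => hkl ?_
      have : (⟨k, hk⟩ : Fin M) = ⟨l, hl⟩ := e.injective hEq
      exact congrArg Fin.val this
    all_goals simp
  have hval : ∀ k : Fin M, g (k : ℕ) = f (e k) := by
    intro k
    simp only [hg, k.isLt, dif_pos, Fin.eta]
  have hgu : (⋃ k, g k) = ⋃ i, f i := by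
    apply Set.Subset.antisymm
    · refine Set.iUnion_subset fun k => ?_
      by_cases h : k < M
      · simp only [hg, dif_pos h]; exact Set.subset_iUnion f _
      · simp [hg, dif_neg h]
    · refine Set.iUnion_subset fun i => ?_
      have h1 : f i = g ((e.symm i : Fin M) : ℕ) := by
        rw [hval (e.symm i), Equiv.apply_symm_apply]
      rw [h1]; exact Set.subset_iUnion g _
  ext i j
  have h1 := hadd g hgm hgd i j
  rw [hgu] at h1
  have h2 : HasSum (fun k => Q (g k) i j) (∑ k ∈ Finset.range M, Q (g k) i j) := by
    refine hasSum_sum_of_ne_finset_zero ?_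
    intro k hk
    have hkM : ¬ k < M := by simpa using hk
    simp [hg, dif_neg hkM, h0]
  have h3 := h1.unique h2
  rw [h3, Matrix.sum_apply, Finset.sum_range fun k => Q (g k) i j]
  rw [show ∑ k : Fin M, Q (g (k : ℕ)) i j = ∑ k : Fin M, Q (f (e k)) i j from
    Finset.sum_congr rfl fun k _ => by rw [hval k]]
  exact (Equiv.sum_comp e fun i' => Q (f i') i j)

lemma pad_family {X ι : Type*} [Fintype ι] (f : ι → Set X)
    (hd : Pairwise (Function.onFun Disjoint f)) :
    ∃ g : ℕ → Set X, (⋃ k, g k) = (⋃ i, f i) ∧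
      Pairwise (Function.onFun Disjoint g) ∧
      (∀ k, g k = ∅ ∨ ∃ i, g k = f i) := by
  classical
  set M := Fintype.card ι with hM
  let e : Fin M ≃ ι := (Fintype.equivFin ι).symm
  refine ⟨fun k => if h : k < M then f (e ⟨k, h⟩) else ∅, ?_, ?_, ?_⟩
  · apply Set.Subset.antisymm
    · refine Set.iUnion_subset fun k => ?_
      by_cases h : k < M
      · simp only [dif_pos h]; exact Set.subset_iUnion f _
      · simp [dif_neg h]
    · refine Set.iUnion_subset fun i => ?_
      have h1 : f i = (fun k => if h : k < M then f (e ⟨k, h⟩) else ∅) ((e.symm i : Fin M) : ℕ) := by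
        simp only [Fin.is_lt, dif_pos, Fin.eta, Equiv.apply_symm_apply]
      rw [h1]
      exact Set.subset_iUnion (fun k => if h : k < M then f (e ⟨k, h⟩) else ∅) ((e.symm i : Fin M) : ℕ)
  · intro k l hkl
    simp only [Function.onFun]
    split_ifs with hk hl hl
    · refine hd fun hEq => hkl ?_
      have : (⟨k, hk⟩ : Fin M) = ⟨l, hl⟩ := e.injective hEq
      exact congrArg Fin.val this
    all_goals simp
  · intro k
    by_cases h : k < M
    · exact Or.inr ⟨e ⟨k, h⟩, by simp [dif_pos h]⟩
    · exact Or.inl (by simp [dif_neg h])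

set_option maxHeartbeats 1000000 in
/-- For any E ∈ Σ and n, Q*_ω(σ^{-n}(E)) = Φ^{(n)†}_ω(Q*_{θⁿ(ω)}(E)) a.s.; consequently
ℚ_{ϑ;ω}(σ^{-n}(E)) = ⟨Φ^{(n)}_ω(ϑ_ω), Q*_{θⁿ(ω)}(E)⟩ for any random state ϑ. -/
theorem stmt19 {Ω 𝒜 : Type*} {d : ℕ} [Fintype 𝒜] [MeasurableSpace 𝒜]
    [MeasurableSingletonClass 𝒜]
    [MeasurableSpace Ω] (μ : Measure Ω) [IsProbabilityMeasure μ]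
    (θ θinv : Ω → Ω) (hθ : Ergodic θ μ)
    (hinvm : Measurable θinv) (hli : Function.LeftInverse θinv θ)
    (hri : Function.RightInverse θinv θ)
    (v : Ω → 𝒜 → Matrix (Fin d) (Fin d) ℂ)
    (hvmeas : ∀ a i j, Measurable fun ω => v ω a i j)
    (hv : ∀ᵐ ω ∂μ, ∑ a, (v ω a)ᴴ * v ω a = 1)
    -- the matrix-valued quenched quantum measure Q*
    (Qstar : Ω → Set (ℕ → 𝒜) → Matrix (Fin d) (Fin d) ℂ)
    (hQscyl : ∀ n (w : Fin n → 𝒜), ∀ᵐ ω ∂μ, Qstar ω (cyl n w) = Tdagq v θ ω n w 1)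
    (hQsadd : ∀ ω (f : ℕ → Set (ℕ → 𝒜)), (∀ k, MeasurableSet (f k)) →
      Pairwise (Function.onFun Disjoint f) →
      ∀ i j, HasSum (fun k => Qstar ω (f k) i j) (Qstar ω (⋃ k, f k) i j)) :
    ∀ E : Set (ℕ → 𝒜), MeasurableSet E → ∀ n : ℕ,
      (∀ᵐ ω ∂μ,
        Qstar ω ((fun x (k : ℕ) => x (k + n)) ⁻¹' E)
          = Phidagq v θ ω n (Qstar (θ^[n] ω) E)) ∧
      (∀ (ϑ : Ω → Matrix (Fin d) (Fin d) ℂ),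
        (∀ i j, Measurable fun ω => ϑ ω i j) →
        (∀ᵐ ω ∂μ, (ϑ ω).PosSemidef ∧ (ϑ ω).trace = 1) →
        ∀ (Qϑ : Ω → Measure (ℕ → 𝒜)),
          (∀ ω, IsProbabilityMeasure (Qϑ ω)) →
          (∀ E' : Set (ℕ → 𝒜), MeasurableSet E' →
            ∀ᵐ ω ∂μ, Qϑ ω E'
              = ENNReal.ofReal (Matrix.trace ((ϑ ω)ᴴ * Qstar ω E')).re) →
          ∀ᵐ ω ∂μ,
            Qϑ ω ((fun x (k : ℕ) => x (k + n)) ⁻¹' E)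
              = ENNReal.ofReal
                  (Matrix.trace ((Phiq v θ ω n (ϑ ω))ᴴ * Qstar (θ^[n] ω) E)).re) := by
  classical
  -- pull back a.e. statements along iterates of θ
  have hae : ∀ (m : ℕ) {p : Ω → Prop}, (∀ᵐ ω ∂μ, p ω) → (∀ᵐ ω ∂μ, p (θ^[m] ω)) := by
    intro m p hp
    exact ((hθ.toMeasurePreserving.iterate m).quasiMeasurePreserving.tendsto_ae).eventually hp
  have hshift : ∀ m : ℕ, Measurable (fun x : ℕ → 𝒜 => fun k => x (k + m)) :=
    fun m => measurable_pi_lambda _ fun k => measurable_pi_apply (k + m)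
  have hcylm : ∀ (N : ℕ) (w : Fin N → 𝒜), MeasurableSet (cyl N w) := by
    intro N w
    have : cyl N w = ⋂ i : Fin N, (fun x : ℕ → 𝒜 => x i) ⁻¹' {w i} := by
      ext x; simp [cyl]
    rw [this]
    exact MeasurableSet.iInter fun i =>
      (measurable_pi_apply (i : ℕ)) (measurableSet_singleton _)
  have hQe : ∀ ω, Qstar ω ∅ = 0 := fun ω => Q_empty_aux (Qstar ω) (hQsadd ω)
  have hcyl0 : cyl 0 (fun i : Fin 0 => (i.elim0 : 𝒜)) = Set.univ := by
    ext x
    constructor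
    · intro _; trivial
    · intro _ i; exact i.elim0
  have hUniv : ∀ᵐ ω ∂μ, Qstar ω Set.univ = 1 := by
    filter_upwards [hQscyl 0 (fun i : Fin 0 => (i.elim0 : 𝒜))] with ω h
    rw [← hcyl0, h]; rfl
  have hpre0 : ∀ E : Set (ℕ → 𝒜), (fun (x : ℕ → 𝒜) (k : ℕ) => x (k + 0)) ⁻¹' E = E := fun _ => rfl
  have hpre_succ : ∀ (n : ℕ) (E : Set (ℕ → 𝒜)),
      (fun (x : ℕ → 𝒜) (k : ℕ) => x (k + (n + 1))) ⁻¹' E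
        = (fun (x : ℕ → 𝒜) (k : ℕ) => x (k + 1)) ⁻¹'
          ((fun (x : ℕ → 𝒜) (k : ℕ) => x (k + n)) ⁻¹' E) :=
    fun _ _ => rfl
  have hdecomp : ∀ (N : ℕ) (w : Fin N → 𝒜),
      (fun (x : ℕ → 𝒜) (k : ℕ) => x (k + 1)) ⁻¹' cyl N w = ⋃ a : 𝒜, cyl (N + 1) (Fin.cons a w) := by
    intro N w
    ext x
    simp only [Set.mem_preimage, Set.mem_iUnion, cyl, Set.mem_setOf_eq]
    constructor
    · intro h
      refine ⟨x 0, fun i => ?_⟩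
      refine Fin.cases ?_ ?_ i
      · simp
      · intro i'
        simpa [Fin.cons_succ] using h i'
    · rintro ⟨a, h⟩ i
      simpa [Fin.cons_succ] using h i.succ
  have hcyl_disj : ∀ N : ℕ,
      Pairwise (Function.onFun Disjoint (fun w : Fin N → 𝒜 => cyl N w)) := by
    intro N w1 w2 hne
    rw [Function.onFun, Set.disjoint_left]
    intro x h1 h2
    apply hne; funext i
    rw [← h1 i, ← h2 i]
  have hcons_disj : ∀ (N : ℕ) (w : Fin N → 𝒜),
      Pairwise (Function.onFun Disjoint fun a : 𝒜 => cyl (N + 1) (Fin.cons a w)) := by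
    intro N w a b hne
    exact hcyl_disj (N + 1) (fun h => hne (by simpa using congrFun h 0))
  -- the predicate for the one-step identity
  let P1 : Set (ℕ → 𝒜) → Prop := fun E =>
    ∀ᵐ ω ∂μ, Qstar ω ((fun (x : ℕ → 𝒜) (k : ℕ) => x (k + 1)) ⁻¹' E)
      = Phidagq v θ ω 1 (Qstar (θ ω) E)
  have hP1def : ∀ E : Set (ℕ → 𝒜), P1 E ↔
      (∀ᵐ ω ∂μ, Qstar ω ((fun (x : ℕ → 𝒜) (k : ℕ) => x (k + 1)) ⁻¹' E)
        = Phidagq v θ ω 1 (Qstar (θ ω) E)) := fun _ => Iff.rfl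
  have hP1empty : P1 ∅ := by
    rw [hP1def]
    refine ae_of_all μ fun ω => ?_
    rw [Set.preimage_empty, hQe, hQe]
    simp [phidag_one]
  have hP1union : ∀ f : ℕ → Set (ℕ → 𝒜), Pairwise (Function.onFun Disjoint f) →
      (∀ k, MeasurableSet (f k)) → (∀ k, P1 (f k)) → P1 (⋃ k, f k) := by
    intro f hd hm hP
    simp only [hP1def] at hP ⊢
    have h := (ae_all_iff).2 hP
    filter_upwards [h] with ω hω
    have hm1 : ∀ k, MeasurableSet ((fun (x : ℕ → 𝒜) (k' : ℕ) => x (k' + 1)) ⁻¹' f k) :=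
      fun k => hshift 1 (hm k)
    have hd1 : Pairwise (Function.onFun Disjoint
        fun k => (fun (x : ℕ → 𝒜) (k' : ℕ) => x (k' + 1)) ⁻¹' f k) :=
      fun k l hkl => Disjoint.preimage _ (hd hkl)
    have hU : (fun (x : ℕ → 𝒜) (k' : ℕ) => x (k' + 1)) ⁻¹' (⋃ k, f k)
        = ⋃ k, (fun (x : ℕ → 𝒜) (k' : ℕ) => x (k' + 1)) ⁻¹' f k := Set.preimage_iUnion
    ext i j
    have h1 := hQsadd ω _ hm1 hd1 i j
    rw [← hU] at h1
    have h1' : HasSum (fun k => Phidagq v θ ω 1 (Qstar (θ ω) (f k)) i j)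
        (Qstar ω ((fun (x : ℕ → 𝒜) (k' : ℕ) => x (k' + 1)) ⁻¹' ⋃ k, f k) i j) := by
      have he : (fun k => Qstar ω ((fun (x : ℕ → 𝒜) (k' : ℕ) => x (k' + 1)) ⁻¹' f k) i j)
          = fun k => Phidagq v θ ω 1 (Qstar (θ ω) (f k)) i j := by
        funext k; rw [hω k]
      rwa [he] at h1
    have h3 := hasSum_phidag_one v θ ω (fun p q => hQsadd (θ ω) f hm hd p q) i j
    exact h1'.unique h3
  have hP1cyl : ∀ (N : ℕ) (w : Fin N → 𝒜), P1 (cyl N w) := by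
    intro N w
    rw [hP1def]
    have hpull := hae 1 (hQscyl N w)
    have hall : ∀ᵐ ω ∂μ, ∀ a : 𝒜,
        Qstar ω (cyl (N + 1) (Fin.cons a w)) = Tdagq v θ ω (N + 1) (Fin.cons a w) 1 :=
      (ae_all_iff).2 fun a => hQscyl (N + 1) (Fin.cons a w)
    filter_upwards [hpull, hall] with ω h1 h2
    rw [Function.iterate_one] at h1
    have hfe : Qstar ω ((fun (x : ℕ → 𝒜) (k : ℕ) => x (k + 1)) ⁻¹' cyl N w)
        = ∑ a : 𝒜, Qstar ω (cyl (N + 1) (Fin.cons a w)) := by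
      rw [hdecomp N w]
      rw [Q_finadd_aux (Qstar ω) (hQsadd ω) _ (fun a => hcylm _ _) (hcons_disj N w)]
    rw [hfe, phidag_one]
    refine Finset.sum_congr rfl fun a _ => ?_
    rw [h2 a, h1, tdag_succ]
    simp [Fin.cons_succ]
  have hP1compl : ∀ E : Set (ℕ → 𝒜), MeasurableSet E → P1 E → P1 Eᶜ := by
    intro E hE hPE
    rw [hP1def] at hPE ⊢
    have hv1 := hae 1 hv
    have hU1 := hae 1 hUniv
    have hcf : ∀ (ω' : Ω) (A : Set (ℕ → 𝒜)), MeasurableSet A → Qstar ω' Set.univ = 1 →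
        Qstar ω' Aᶜ = 1 - Qstar ω' A := by
      intro ω' A hA hU
      have hsum := Q_finadd_aux (Qstar ω') (hQsadd ω')
        (fun b : Bool => if b = true then A else Aᶜ)
        (by intro b; cases b <;> simp [hA, hA.compl])
        (by
          intro b c hbc
          match b, c with
          | true, true => exact absurd rfl hbc
          | false, false => exact absurd rfl hbc
          | true, false => simpa [Function.onFun] using (disjoint_compl_right : Disjoint A Aᶜ)
          | false, true => simpa [Function.onFun] using (disjoint_compl_left : Disjoint Aᶜ A))
      have hu : (⋃ b : Bool, (fun b : Bool => if b = true then A else Aᶜ) b) = Set.univ := by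
        ext x
        simp only [Set.mem_iUnion, Set.mem_univ, iff_true]
        by_cases h : x ∈ A
        · exact ⟨true, by simpa⟩
        · exact ⟨false, by simpa⟩
      rw [hu, hU, Fintype.sum_bool] at hsum
      simp only [if_true, Bool.false_eq_true, if_false] at hsum
      rw [eq_sub_iff_add_eq, add_comm]
      exact hsum.symm
    filter_upwards [hPE, hUniv, hU1, hv1] with ω h1 h2 h3 h4
    rw [Function.iterate_one] at h3 h4
    have hone : Phidagq v θ ω 1 1 = 1 := by
      rw [phidag_one]; simpa using h4
    rw [Set.preimage_compl, hcf ω _ (hshift 1 hE) h2, h1, hcf (θ ω) E hE h3,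
      phidag_one_sub, hone]
  have hP1basic : ∀ t ∈ measurableCylinders (fun _ : ℕ => 𝒜), P1 t := by
    intro t ht
    obtain ⟨s, S, hS, rfl⟩ := (mem_measurableCylinders t).1 ht
    set N := s.sup id + 1 with hN
    have hiN : ∀ i ∈ s, i < N := fun i hi => Nat.lt_succ_of_le (Finset.le_sup (f := id) hi)
    set r : (Fin N → 𝒜) → ((i : s) → 𝒜) := fun w i => w ⟨i.1, hiN i.1 i.2⟩ with hr
    set f : (Fin N → 𝒜) → Set (ℕ → 𝒜) := fun w => if r w ∈ S then cyl N w else ∅ with hf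
    have hdec : cylinder s S = ⋃ w, f w := by
      ext x
      simp only [mem_cylinder, Set.mem_iUnion]
      constructor
      · intro hx
        refine ⟨fun i : Fin N => x i, ?_⟩
        have hrx : r (fun i : Fin N => x i) = s.restrict x := rfl
        simp only [hf, hrx, if_pos hx]
        intro i; rfl
      · rintro ⟨w, hw⟩
        by_cases h : r w ∈ S
        · simp only [hf, if_pos h] at hw
          have hx : s.restrict x = r w := by
            funext i; exact hw ⟨i.1, hiN i.1 i.2⟩
          rw [hx]; exact h
        · simp [hf, if_neg h] at hw
    have hfm : ∀ w, MeasurableSet (f w) := by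
      intro w; by_cases h : r w ∈ S <;> simp [hf, h, hcylm]
    have hfd : Pairwise (Function.onFun Disjoint f) := by
      intro w1 w2 hne
      simp only [Function.onFun, hf]
      split_ifs
      · exact hcyl_disj N hne
      all_goals simp
    have hfP : ∀ w, P1 (f w) := by
      intro w
      by_cases h : r w ∈ S
      · rw [show f w = cyl N w from by simp [hf, if_pos h]]
        exact hP1cyl N w
      · rw [show f w = ∅ from by simp [hf, if_neg h]]
        exact hP1empty
    obtain ⟨g, hgu, hgd, hgv⟩ := pad_family f hfd
    rw [hdec, ← hgu]
    refine hP1union g hgd ?_ ?_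
    · intro k
      rcases hgv k with h | ⟨i, h⟩
      · rw [h]; exact MeasurableSet.empty
      · rw [h]; exact hfm i
    · intro k
      rcases hgv k with h | ⟨i, h⟩
      · rw [h]; exact hP1empty
      · rw [h]; exact hfP i
  have key1 : ∀ E : Set (ℕ → 𝒜), MeasurableSet E → P1 E := by
    have hgen : (inferInstance : MeasurableSpace (ℕ → 𝒜))
        = MeasurableSpace.generateFrom (measurableCylinders (fun _ : ℕ => 𝒜)) := by
      rw [generateFrom_measurableCylinders]
    intro E hE
    exact MeasurableSpace.induction_on_inter (C := fun s _ => P1 s) hgen isPiSystem_measurableCylinders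
      hP1empty hP1basic hP1compl hP1union E hE
  have key : ∀ E : Set (ℕ → 𝒜), MeasurableSet E → ∀ n : ℕ,
      ∀ᵐ ω ∂μ, Qstar ω ((fun x (k : ℕ) => x (k + n)) ⁻¹' E)
        = Phidagq v θ ω n (Qstar (θ^[n] ω) E) := by
    intro E hE n
    induction n with
    | zero =>
      refine ae_of_all μ fun ω => ?_
      rw [hpre0]
      rfl
    | succ n ih =>
      have h1 := (hP1def _).1 (key1 _ (hshift n hE))
      have h2 := hae 1 ih
      filter_upwards [h1, h2] with ω hω1 hω2
      rw [Function.iterate_one] at hω2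
      calc Qstar ω ((fun x (k : ℕ) => x (k + (n + 1))) ⁻¹' E)
          = Phidagq v θ ω 1 (Phidagq v θ (θ ω) n (Qstar (θ^[n] (θ ω)) E)) := by
            rw [hpre_succ n E, hω1, hω2]
        _ = Phidagq v θ ω (n + 1) (Qstar (θ^[n + 1] ω) E) := by
            conv_rhs => rw [phidag_succ, Function.iterate_succ_apply]
  intro E hE n
  refine ⟨key E hE n, ?_⟩
  intro ϑ hϑmeas hϑ Qϑ hprob hQϑ
  filter_upwards [hQϑ _ (hshift n hE), key E hE n] with ω h1 h2
  rw [h1, h2, trace_adjoint]
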